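/- A system of string equations that has only border blocks is satisfied by some assignment if and only if it admits a feasible length function ℓ. In particular, a system in which every pattern 𝒳_i has length exactly 2 is satisfiable if and only if it admits a feasible length function. (Combinatorial core of Proposition 5.1.) -/

import Mathlib

open List


namespace Stmt4Aux

variable {α β : Type*}

/-- Split a list into `k` pieces: the first `k-1` pieces are singletons,
the last piece is the rest. -/
def splitP (l : List α) : ℕ → List (List α)
  | 0 => []
  | 1 => [l]
  | (k+2) => l.take 1 :: splitP (l.drop 1) (k+1)

lemma length_splitP : ∀ (k : ℕ) (l : List α), (splitP l k).length = k
  | 0, _ => rfl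
  | 1, _ => rfl
  | (k+2), l => by
      simp only [splitP, length_cons, length_splitP (k+1) (l.drop 1)]

lemma flatten_splitP : ∀ (k : ℕ) (l : List α), (splitP l (k+1)).flatten = l
  | 0, l => by simp [splitP]
  | (k+1), l => by
      simp only [splitP, flatten_cons, flatten_splitP k (l.drop 1)]
      exact take_append_drop 1 l

lemma ne_nil_of_mem_splitP : ∀ (k : ℕ) (l : List α), k ≤ l.length →
    ∀ m ∈ splitP l k, m ≠ []
  | 0, l, _ => by simp [splitP]
  | 1, l, h => by
      intro m hm
      simp only [splitP, mem_singleton] at hm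
      subst hm
      intro hnil
      simp [hnil] at h
  | (k+2), l, h => by
      intro m hm
      simp only [splitP, mem_cons] at hm
      rcases hm with hm | hm
      · subst hm
        intro hnil
        have : l = [] := by
          cases l with
          | nil => rfl
          | cons a t => simp at hnil
        simp [this] at h
      · exact ne_nil_of_mem_splitP (k+1) (l.drop 1)
          (by simp only [length_drop]; omega) m hm

lemma two_le_count [DecidableEq β] {l : List β} {a : β} {k k' : ℕ}
    (hkk : k < k') (hk' : k' < l.length) (h1 : l[k]'(lt_trans hkk hk') = a)
    (h2 : l[k'] = a) : 2 ≤ l.count a := by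
  have hsplit : l = l.take k' ++ l.drop k' := (take_append_drop k' l).symm
  have h1' : a ∈ l.take k' := by
    have hk : k < (l.take k').length := by
      simp only [length_take]; omega
    have : (l.take k')[k] = a := by rw [getElem_take]; exact h1
    exact this ▸ getElem_mem hk
  have h2' : a ∈ l.drop k' := by
    have h0 : 0 < (l.drop k').length := by simp only [length_drop]; omega
    have : (l.drop k')[0] = a := by rw [getElem_drop]; simpa using h2
    exact this ▸ getElem_mem h0
  calc 2 = 1 + 1 := rfl
    _ ≤ (l.take k').count a + (l.drop k').count a := by
        exact Nat.add_le_add (count_pos_iff.2 h1') (count_pos_iff.2 h2')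
    _ = l.count a := by rw [← count_append, ← hsplit]

/-- The list of pieces for one equation. -/
def pcs (t sp sq m : List α) (n : ℕ) : List (List α) :=
  if n = 1 then [t] else sp :: (splitP m (n - 2) ++ [sq])

lemma length_pcs (t sp sq m : List α) {n : ℕ} (h : 1 ≤ n) :
    (pcs t sp sq m n).length = n := by
  unfold pcs; split
  · simp only [length_singleton]; omega
  · simp only [length_cons, length_append, length_splitP, length_singleton,
      length_nil]
    omega

lemma flatten_pcs (t sp sq m : List α) {n : ℕ} (h : 1 ≤ n)
    (ht2 : 2 ≤ n → t = sp ++ (m ++ sq)) (hm2 : n = 2 → m = []) :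
    (pcs t sp sq m n).flatten = t := by
  unfold pcs; split
  · simp
  · rename_i hne1
    have h2 : 2 ≤ n := by omega
    rcases Nat.lt_or_ge n 3 with h3 | h3
    · have hn2 : n = 2 := by omega
      subst hn2
      have hm : m = [] := hm2 rfl
      simp [splitP, ht2 (le_refl 2), hm]
    · obtain ⟨j, hj⟩ : ∃ j, n - 2 = j + 1 := ⟨n - 3, by omega⟩
      rw [hj]
      simp only [flatten_cons, flatten_append, flatten_splitP j m,
        flatten_cons, flatten_nil, append_nil]
      exact (ht2 h2).symm

lemma ne_nil_pcs (t sp sq m : List α) {n : ℕ} (htne : t ≠ [])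
    (hsp : sp ≠ []) (hsq : sq ≠ []) (hm : n - 2 ≤ m.length) :
    ∀ x ∈ pcs t sp sq m n, x ≠ [] := by
  unfold pcs; split
  · intro x hx
    simp only [mem_singleton] at hx
    exact hx ▸ htne
  · intro x hx
    rcases mem_cons.1 hx with hx | hx
    · exact hx ▸ hsp
    · rcases mem_append.1 hx with hx | hx
      · exact ne_nil_of_mem_splitP (n - 2) m hm x hx
      · simp only [mem_singleton] at hx
        exact hx ▸ hsq

lemma pcs_getD_zero (t sp sq m : List α) {n : ℕ} (h : 2 ≤ n) :
    (pcs t sp sq m n).getD 0 [] = sp := by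
  unfold pcs; rw [if_neg (by omega)]; rfl

lemma pcs_getD_last (t sp sq m : List α) {n : ℕ} (h : 2 ≤ n) :
    (pcs t sp sq m n).getD (n - 1) [] = sq := by
  unfold pcs; rw [if_neg (by omega)]
  obtain ⟨j, hj⟩ : ∃ j, n - 1 = j + 1 ∧ j = n - 2 := ⟨n - 2, by omega, rfl⟩
  rw [hj.1, getD_cons_succ]
  rw [getD_eq_getElem _ _ (by
    simp only [length_append, length_splitP, length_singleton]; omega)]
  rw [getElem_append_right (by rw [length_splitP]; omega)]
  simp [length_splitP, hj.2]

lemma pcs_getD_one (t sp sq m : List α) :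
    (pcs t sp sq m 1).getD 0 [] = t := by
  unfold pcs; rw [if_pos rfl]; rfl

open Classical in
noncomputable def theSigma {r : ℕ} (P : Fin r → List β)
    (PCS : Fin r → List (List α)) (dflt : β → List α) : β → List α :=
  fun X =>
    if h : ∃ ik : (Σ i : Fin r, Fin (P i).length),
        0 < (ik.2 : ℕ) ∧ (ik.2 : ℕ) + 1 < (P ik.1).length ∧ (P ik.1).get ik.2 = X
    then (PCS h.choose.1).getD (h.choose.2 : ℕ) []
    else dflt X

end Stmt4Aux

open Stmt4Aux



/-- A length function `ℓ : β → ℕ` is *feasible* for the system of string equations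
`{T i ≡ P i : i : Fin r}` if:
(a) `ℓ X ≥ 1` for every block `X` occurring in the system;
(b) for every block `X` there is a string `s` of length `ℓ X` which is a prefix of
every target whose pattern begins with `X` and a suffix of every target whose pattern
ends with `X`;
(c) for every equation `T ≡ 𝒳` with first block `p` and last block `q`:
if `|𝒳| = 1` then `ℓ p = |T|`; if `|𝒳| = 2` then `ℓ p + ℓ q = |T|`; and if `|𝒳| ≥ 3`
then `ℓ p + ℓ q + (|𝒳| − 2) ≤ |T|`. -/
def Feasible {α β : Type*} {r : ℕ} (T : Fin r → List α) (P : Fin r → List β)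
    (ℓ : β → ℕ) : Prop :=
  (∀ X : β, (∃ i, X ∈ P i) → 1 ≤ ℓ X) ∧
  (∀ X : β, ∃ s : List α, s.length = ℓ X ∧
      (∀ i, (P i).head? = some X → s <+: T i) ∧
      (∀ i, (P i).getLast? = some X → s <:+ T i)) ∧
  (∀ i, ∀ p q : β, (P i).head? = some p → (P i).getLast? = some q →
      ((P i).length = 1 → ℓ p = (T i).length) ∧
      ((P i).length = 2 → ℓ p + ℓ q = (T i).length) ∧
      (3 ≤ (P i).length → ℓ p + ℓ q + ((P i).length - 2) ≤ (T i).length))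

/-- A system of string equations with *only border blocks*
(every block occurring at an internal position — neither first nor last — of some
pattern occurs exactly once in the whole system) is satisfied by some assignment of
nonempty strings to the blocks if and only if it admits a feasible length function.
(In particular this applies to systems whose patterns all have length exactly 2,
since such systems have no internal positions at all.) -/
theorem stmt_4 {α β : Type*} [DecidableEq β] (r : ℕ) (hr : 1 ≤ r)
    (T : Fin r → List α) (P : Fin r → List β)
    (hT : ∀ i, T i ≠ []) (hP : ∀ i, P i ≠ [])
    (hborder : ∀ i : Fin r, ∀ p : Fin (P i).length,
      0 < (p : ℕ) → (p : ℕ) + 1 < (P i).length →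
      (∑ j, (P j).count ((P i).get p)) = 1) :
    (∃ σ : β → List α, (∀ b : β, σ b ≠ []) ∧ ∀ i, (P i).flatMap σ = T i) ↔
    (∃ ℓ : β → ℕ, Feasible T P ℓ) := by
  classical
  constructor
  · rintro ⟨σ, hne, heq⟩
    refine ⟨fun X => (σ X).length, ?_, ?_, ?_⟩

    · intro X _
      have := hne X
      simpa [Nat.one_le_iff_ne_zero, List.length_eq_zero_iff] using this
    · intro X
      refine ⟨σ X, rfl, ?_, ?_⟩
      · intro i hi
        obtain ⟨t, ht⟩ := head?_eq_some_iff.1 hi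
        refine ⟨t.flatMap σ, ?_⟩
        rw [← heq i, ht, flatMap_cons]
      · intro i hi
        obtain ⟨ys, hys⟩ := getLast?_eq_some_iff.1 hi
        refine ⟨ys.flatMap σ, ?_⟩
        rw [← heq i, hys, flatMap_append, flatMap_cons, flatMap_nil, append_nil]
    · intro i p q hp hq
      obtain ⟨t, ht⟩ := head?_eq_some_iff.1 hp
      obtain ⟨ys, hys⟩ := getLast?_eq_some_iff.1 hq
      refine ⟨?_, ?_, ?_⟩
      · intro h1
        have htnil : t = [] := by
          have := congrArg List.length ht; rw [h1] at this; simpa using this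
        rw [← heq i, ht, htnil]; simp
      · intro h2
        have htl : t.length = 1 := by
          have := congrArg List.length ht
          simp only [length_cons] at this; omega
        obtain ⟨x, hx⟩ := List.length_eq_one_iff.1 htl
        have hxq : x = q := by
          have : (P i).getLast? = some x := by rw [ht, hx]; rfl
          rw [hq] at this; exact (Option.some_inj.1 this).symm
        show (σ p).length + (σ q).length = (T i).length
        rw [← heq i, ht, hx, hxq]; simp
      · intro h3
        have htne : t ≠ [] := by
          intro hnil
          have := congrArg List.length ht; simp [hnil] at this; omega
        have hq' : t.getLast htne = q := by
          have h1 : (P i).getLast (hP i) = q := by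
            rw [getLast?_eq_getLast (hP i)] at hq
            exact Option.some_inj.1 hq
          rw [← h1]
          have : (P i).getLast (hP i) = (p :: t).getLast (cons_ne_nil p t) := by
            congr 1 <;> rw [ht]
          rw [this, getLast_cons htne]
        have hdec : P i = p :: (t.dropLast ++ [q]) := by
          rw [ht]; congr 1
          rw [← hq']; exact (dropLast_append_getLast htne).symm
        have hlen : (T i).length = (σ p).length + ((t.dropLast.map (fun m => (σ m).length)).sum + (σ q).length) := by
          rw [← heq i, hdec]
          simp [flatMap_cons, flatMap_append, length_flatMap, Function.comp_def]
        have hsum : t.dropLast.length ≤ (t.dropLast.map (fun m => (σ m).length)).sum := by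
          have := List.length_le_sum_of_one_le (t.dropLast.map (fun m => (σ m).length)) ?_
          · simpa using this
          · intro x hx
            simp only [mem_map] at hx
            obtain ⟨m, _, hm⟩ := hx
            simp only [← hm, Nat.one_le_iff_ne_zero, ne_eq, List.length_eq_zero_iff]
            exact hne m
        have hdl : t.dropLast.length = (P i).length - 2 := by
          have := congrArg List.length ht
          simp only [length_cons, length_dropLast] at this ⊢
          omega
        show (σ p).length + (σ q).length + ((P i).length - 2) ≤ (T i).length
        omega
  · rintro ⟨ℓ, ha, hb, hc⟩
    choose s hslen hspre hssuf using hb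
    have hhead : ∀ i, (P i).head? = some ((P i).head (hP i)) :=
      fun i => head?_eq_head (hP i)
    have hlast : ∀ i, (P i).getLast? = some ((P i).getLast (hP i)) :=
      fun i => List.getLast?_eq_getLast (hP i)
    have hC := fun i => hc i ((P i).head (hP i)) ((P i).getLast (hP i)) (hhead i) (hlast i)
    have hn1 : ∀ i, 1 ≤ (P i).length := fun i => List.length_pos_iff.2 (hP i)
    have hle : ∀ i, 2 ≤ (P i).length →
        ℓ ((P i).head (hP i)) + ℓ ((P i).getLast (hP i)) ≤ (T i).length := by
      intro i h2
      rcases eq_or_lt_of_le h2 with h | h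
      · exact le_of_eq ((hC i).2.1 h.symm)
      · have := (hC i).2.2 (by omega); omega
    -- the middle part of each target
    have hmidlen : ∀ i,
        (((T i).drop (ℓ ((P i).head (hP i)))).take
          ((T i).length - ℓ ((P i).head (hP i)) - ℓ ((P i).getLast (hP i)))).length
        = (T i).length - ℓ ((P i).head (hP i)) - ℓ ((P i).getLast (hP i)) := by
      intro i
      simp only [length_take, length_drop]
      omega
    have hdecomp : ∀ i, 2 ≤ (P i).length →
        T i = s ((P i).head (hP i)) ++
          ((((T i).drop (ℓ ((P i).head (hP i)))).take
            ((T i).length - ℓ ((P i).head (hP i)) - ℓ ((P i).getLast (hP i)))) ++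
            s ((P i).getLast (hP i))) := by
      intro i h2
      have hsp : s ((P i).head (hP i)) = (T i).take (ℓ ((P i).head (hP i))) := by
        have := prefix_iff_eq_take.1 (hspre _ i (hhead i))
        rwa [hslen] at this
      have hsq : s ((P i).getLast (hP i)) =
          (T i).drop ((T i).length - ℓ ((P i).getLast (hP i))) := by
        have := suffix_iff_eq_drop.1 (hssuf _ i (hlast i))
        rwa [hslen] at this
      have hms : (((T i).drop (ℓ ((P i).head (hP i)))).take
            ((T i).length - ℓ ((P i).head (hP i)) - ℓ ((P i).getLast (hP i)))) ++
            s ((P i).getLast (hP i)) = (T i).drop (ℓ ((P i).head (hP i))) := by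
        rw [hsq]
        have h1 : (T i).drop ((T i).length - ℓ ((P i).getLast (hP i))) =
            ((T i).drop (ℓ ((P i).head (hP i)))).drop
              ((T i).length - ℓ ((P i).head (hP i)) - ℓ ((P i).getLast (hP i))) := by
          rw [drop_drop]
          congr 1
          have := hle i h2
          omega
        rw [h1]
        exact take_append_drop _ _
      rw [hms, hsp]
      exact (take_append_drop _ _).symm
    -- the pieces
    set PCS : Fin r → List (List α) := fun i =>
      pcs (T i) (s ((P i).head (hP i))) (s ((P i).getLast (hP i)))
        (((T i).drop (ℓ ((P i).head (hP i)))).take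
          ((T i).length - ℓ ((P i).head (hP i)) - ℓ ((P i).getLast (hP i))))
        ((P i).length) with hPCS
    have hPCSlen : ∀ i, (PCS i).length = (P i).length := by
      intro i; rw [hPCS]; exact length_pcs _ _ _ _ (hn1 i)
    have hPCSflat : ∀ i, (PCS i).flatten = T i := by
      intro i; rw [hPCS]
      refine flatten_pcs _ _ _ _ (hn1 i) (hdecomp i) ?_
      intro h2
      have := (hC i).2.1 h2
      have := hmidlen i
      rw [← List.length_eq_zero_iff]
      omega
    have hsne : ∀ (X : β), (∃ i, X ∈ P i) → s X ≠ [] := by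
      intro X hX
      have := ha X hX
      have := hslen X
      intro hnil
      rw [hnil] at this
      simp at this
      omega
    have hPCSne : ∀ i, ∀ x ∈ PCS i, x ≠ [] := by
      intro i
      rw [hPCS]
      refine ne_nil_pcs _ _ _ _ (hT i) (hsne _ ⟨i, head_mem (hP i)⟩)
        (hsne _ ⟨i, getLast_mem (hP i)⟩) ?_
      rw [hmidlen i]
      rcases Nat.lt_or_ge (P i).length 3 with h3 | h3
      · omega
      · have := (hC i).2.2 h3; omega
    -- the key uniqueness consequence of `hborder`
    have hcount : ∀ (i' : Fin r) (k' : Fin (P i').length), 0 < (k' : ℕ) →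
        (k' : ℕ) + 1 < (P i').length →
        ∀ (i : Fin r) (k : Fin (P i).length), (P i).get k = (P i').get k' →
        i = i' ∧ (k : ℕ) = (k' : ℕ) := by
      intro i' k' h0 h1 i k hget
      have hsum := hborder i' k' h0 h1
      have hmem : (P i').get k' ∈ P i := hget ▸ List.get_mem (P i) k
      have hmem' : (P i').get k' ∈ P i' := List.get_mem (P i') k'
      have hci : 1 ≤ (P i).count ((P i').get k') := List.count_pos_iff.2 hmem
      have hci' : 1 ≤ (P i').count ((P i').get k') := List.count_pos_iff.2 hmem'
      have hii : i = i' := by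
        by_contra hne
        have hpair : (P i).count ((P i').get k') + (P i').count ((P i').get k') ≤
            ∑ j, (P j).count ((P i').get k') := by
          have e1 := Finset.sum_pair (f := fun j => count ((P i').get k') (P j)) hne
          have e2 := Finset.sum_le_sum_of_subset
            (f := fun j => count ((P i').get k') (P j))
            (Finset.subset_univ ({i, i'} : Finset (Fin r)))
          rw [e1] at e2
          exact e2
        omega
      subst hii
      refine ⟨rfl, ?_⟩
      by_contra hne
      have h2c : 2 ≤ (P i).count ((P i).get k') := by
        rcases Nat.lt_or_ge (k : ℕ) (k' : ℕ) with hlt | hge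
        · exact two_le_count hlt k'.2 (by rw [← List.get_eq_getElem]; exact hget)
            (by rw [← List.get_eq_getElem])
        · have hlt : (k' : ℕ) < (k : ℕ) := by omega
          exact two_le_count hlt k.2 (by rw [← List.get_eq_getElem])
            (by rw [← List.get_eq_getElem]; exact hget)
      have hone : (P i).count ((P i).get k') ≤ ∑ j, (P j).count ((P i).get k') :=
        Finset.single_le_sum (f := fun j => count ((P i).get k') (P j))
          (fun _ _ => Nat.zero_le _) (Finset.mem_univ i)
      omega
    -- the assignment
    refine ⟨theSigma P PCS (fun X => if s X = [] then [(T ⟨0, hr⟩).head (hT _)] else s X),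
      ?_, ?_⟩
    · -- nonemptiness
      intro b
      unfold theSigma
      split
      · rename_i h
        have hlt : (h.choose.2 : ℕ) < (PCS h.choose.1).length := by
          rw [hPCSlen]; exact h.choose.2.2
        rw [getD_eq_getElem _ _ hlt]
        exact hPCSne _ _ (getElem_mem hlt)
      · by_cases hsb : s b = [] <;> simp [hsb]
    · -- the equations
      intro i
      have hmap : (P i).map (theSigma P PCS
          (fun X => if s X = [] then [(T ⟨0, hr⟩).head (hT _)] else s X)) = PCS i := by
        refine List.ext_getElem (by rw [length_map, hPCSlen]) ?_
        intro k hk1 hk2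
        rw [length_map] at hk1
        rw [getElem_map]
        by_cases hint : 0 < k ∧ k + 1 < (P i).length
        · -- internal position
          have hex : ∃ ik : (Σ j : Fin r, Fin (P j).length),
              0 < (ik.2 : ℕ) ∧ (ik.2 : ℕ) + 1 < (P ik.1).length ∧
              (P ik.1).get ik.2 = (P i)[k] :=
            ⟨⟨i, ⟨k, hk1⟩⟩, hint.1, hint.2, by rw [List.get_eq_getElem]⟩
          unfold theSigma
          rw [dif_pos hex]
          obtain ⟨h0, h1, h2⟩ := hex.choose_spec
          obtain ⟨hii, hkk⟩ := hcount hex.choose.1 hex.choose.2 h0 h1 i ⟨k, hk1⟩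
            (by rw [h2, List.get_eq_getElem])
          have hkk' : (hex.choose.2 : ℕ) = k := hkk.symm
          rw [hkk', ← hii]
          exact getD_eq_getElem _ _ (by rw [hPCSlen]; exact hk1)
        · -- border position
          have hk0 : k = 0 ∨ k = (P i).length - 1 := by omega
          have hnotex : ¬ ∃ ik : (Σ j : Fin r, Fin (P j).length),
              0 < (ik.2 : ℕ) ∧ (ik.2 : ℕ) + 1 < (P ik.1).length ∧
              (P ik.1).get ik.2 = (P i)[k] := by
            rintro ⟨ik, h0, h1, h2⟩
            obtain ⟨hii, hkk⟩ := hcount ik.1 ik.2 h0 h1 i ⟨k, hk1⟩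
              (by rw [List.get_eq_getElem]; exact h2.symm)
            have e1 : k = (ik.2 : ℕ) := hkk
            have h1' : (ik.2 : ℕ) + 1 < (P i).length := by rw [hii]; exact h1
            omega
          unfold theSigma
          rw [dif_neg hnotex]
          show (if s ((P i)[k]) = [] then [(T ⟨0, hr⟩).head (hT _)]
            else s ((P i)[k])) = (PCS i)[k]
          rw [if_neg (hsne _ ⟨i, getElem_mem hk1⟩)]
          -- now show s ((P i)[k]) = (PCS i)[k]
          rw [← getD_eq_getElem (PCS i) ([] : List α) hk2]
          rcases Nat.lt_or_ge (P i).length 2 with hn2 | hn2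
          · -- length 1
            have hn1' : (P i).length = 1 := by omega
            have hk0' : k = 0 := by omega
            subst hk0'
            have hXp : (P i)[0] = (P i).head (hP i) := getElem_zero hk1
            rw [hXp]
            simp only [hPCS]
            have hTi : s ((P i).head (hP i)) = T i := by
              refine (hspre _ i (hhead i)).eq_of_length ?_
              rw [hslen, (hC i).1 hn1']
            rw [hTi]
            simp only [hn1']
            exact (pcs_getD_one _ _ _ _).symm
          · rcases hk0 with hk0 | hk0
            · subst hk0
              have hXp : (P i)[0] = (P i).head (hP i) := getElem_zero hk1
              rw [hXp]
              simp only [hPCS]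
              exact (pcs_getD_zero _ _ _ _ hn2).symm
            · subst hk0
              have hXq : (P i)[(P i).length - 1] = (P i).getLast (hP i) :=
                (getLast_eq_getElem (hP i)).symm
              rw [hXq]
              simp only [hPCS]
              exact (pcs_getD_last _ _ _ _ hn2).symm
      rw [flatMap_def, hmap, hPCSflat]
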